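/- arXiv:1311.6158 — 5 statements merged into one kernel-verified Lean document; each statement's English description precedes it below -/
import Mathlib

section
/- Let F and G be two sigma-algebras on a probability space, and let C be an event belonging to both F and G such that every set of the form A ∩ C with A ∈ F belongs to G. Then for any integrable random variable V, E[V·1_C | F] = E[ E[V·1_C | G] | F ] almost surely. -/
set_option maxHeartbeats 1000000


open MeasureTheory

theorem stmt_0 {Ω : Type*} {m0 : MeasurableSpace Ω} (P : Measure Ω) [IsProbabilityMeasure P]
    (F G : MeasurableSpace Ω) (hF : F ≤ m0) (hG : G ≤ m0)
    (C : Set Ω) (hCF : MeasurableSet[F] C) (hCG : MeasurableSet[G] C)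
    (hFC : ∀ A : Set Ω, MeasurableSet[F] A → MeasurableSet[G] (A ∩ C))
    (V : Ω → ℝ) (hV : Integrable V P) :
    P[fun ω => V ω * C.indicator (fun _ => (1 : ℝ)) ω | F]
      =ᵐ[P] P[P[fun ω => V ω * C.indicator (fun _ => (1 : ℝ)) ω | G] | F] := by
  letI : MeasurableSpace Ω := m0
  have hC0 : MeasurableSet[m0] C := hG C hCG
  have hWeq : (fun ω => V ω * C.indicator (fun _ => (1 : ℝ)) ω) = C.indicator V := by
    funext ω
    by_cases h : ω ∈ C <;> simp [Set.indicator_of_mem, Set.indicator_of_notMem, h]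
  rw [hWeq]
  have hW : Integrable (C.indicator V) P := hV.indicator hC0
  haveI : SigmaFinite (P.trim hF) := by
    have : IsFiniteMeasure (P.trim hF) := isFiniteMeasure_trim hF
    infer_instance
  refine (ae_eq_condExp_of_forall_setIntegral_eq hF hW
    (fun s _ _ => integrable_condExp.integrableOn)
    (fun s hs _ => ?_) stronglyMeasurable_condExp.aestronglyMeasurable).symm
  rw [setIntegral_condExp hF integrable_condExp hs]
  -- Now: ∫ x in s, E[C.indicator V | G] = ∫ x in s, C.indicator V
  have h1 : P[C.indicator V | G] =ᵐ[P] C.indicator (P[V | G]) :=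
    condExp_indicator hV hCG
  calc ∫ x in s, (P[C.indicator V | G]) x ∂P
      = ∫ x in s, C.indicator (P[V|G]) x ∂P := by
        refine setIntegral_congr_ae (hF s hs) ?_
        filter_upwards [h1] with x hx _ using hx
    _ = ∫ x in s ∩ C, (P[V|G]) x ∂P := setIntegral_indicator hC0
    _ = ∫ x in s ∩ C, V x ∂P := setIntegral_condExp hG hV (hFC s hs)
    _ = ∫ x in s, C.indicator V x ∂P := (setIntegral_indicator hC0).symm
end

section
/- Let Θ_1, ..., Θ_d be i.i.d. random variables uniformly distributed on [-π, π], let ε ∈ (0,1), and let n be an even natural number. Then E[((1/d) Σ_{i=1}^d (ε cos Θ_i + 1 - ε))^n] ≤ E[((1/(d-1)) Σ_{i=1}^{d-1} (ε cos Θ_i + 1 - ε))^n]. In particular, the return probability P(Z^ε_n = 0) of the lazy simple random walk Z^ε on ℤ^{d-1} (which moves to each of the 2(d-1) neighbors with probability ε/(2(d-1)) and stays put with probability 1-ε) is nonincreasing in d for d ≥ 2. -/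
open MeasureTheory Real

/-- The uniform probability measure on `[-π, π]`. -/
noncomputable def uniformPi : Measure ℝ :=
  (volume (Set.Icc (-π) π))⁻¹ • volume.restrict (Set.Icc (-π) π)

lemma uniformPi_volume_Icc : volume (Set.Icc (-π) π) = ENNReal.ofReal (2 * π) := by
  rw [Real.volume_Icc]; ring_nf

instance uniformPi_prob : IsProbabilityMeasure uniformPi := by
  constructor
  rw [uniformPi, Measure.smul_apply, Measure.restrict_apply_univ, smul_eq_mul,
    ENNReal.inv_mul_cancel]
  · rw [uniformPi_volume_Icc, Ne, ENNReal.ofReal_eq_zero, not_le]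
    positivity
  · rw [uniformPi_volume_Icc]; exact ENNReal.ofReal_ne_top

section aux

variable {ε : ℝ}

lemma X_abs_le (hε : ε ∈ Set.Ioo (0 : ℝ) 1) (t : ℝ) : |ε * Real.cos t + 1 - ε| ≤ 1 := by
  obtain ⟨h0, h1⟩ := hε
  have hc := Real.neg_one_le_cos t
  have hc' := Real.cos_le_one t
  rw [abs_le]
  constructor <;> nlinarith

lemma avg_abs_le (hε : ε ∈ Set.Ioo (0 : ℝ) 1) {k : ℕ} (hk : k ≠ 0) (x : Fin k → ℝ) :
    |(1 / (k : ℝ)) * ∑ i, (ε * Real.cos (x i) + 1 - ε)| ≤ 1 := by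
  have hkpos : (0:ℝ) < k := by
    have : 0 < k := Nat.pos_of_ne_zero hk
    exact_mod_cast this
  rw [abs_mul]
  have h1 : |∑ i, (ε * Real.cos (x i) + 1 - ε)| ≤ ∑ i : Fin k, (1:ℝ) :=
    (Finset.abs_sum_le_sum_abs _ _).trans
      (Finset.sum_le_sum fun i _ => X_abs_le hε (x i))
  have h2 : (∑ i : Fin k, (1:ℝ)) = k := by simp
  calc |1 / (k:ℝ)| * |∑ i, (ε * Real.cos (x i) + 1 - ε)|
      ≤ |1 / (k:ℝ)| * k := by
        apply mul_le_mul_of_nonneg_left _ (abs_nonneg _)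
        rw [← h2]; exact h1
    _ = 1 := by rw [abs_of_pos (by positivity)]; field_simp

lemma pow_avg_abs_le (hε : ε ∈ Set.Ioo (0 : ℝ) 1) {k n : ℕ} (hk : k ≠ 0) (x : Fin k → ℝ) :
    |((1 / (k : ℝ)) * ∑ i, (ε * Real.cos (x i) + 1 - ε)) ^ n| ≤ 1 := by
  rw [abs_pow]
  exact pow_le_one₀ (abs_nonneg _) (avg_abs_le hε hk x)

lemma integrable_pow_avg (hε : ε ∈ Set.Ioo (0 : ℝ) 1) {k n : ℕ} (hk : k ≠ 0) :
    Integrable (fun x : Fin k → ℝ =>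
      ((1 / (k : ℝ)) * ∑ i, (ε * Real.cos (x i) + 1 - ε)) ^ n)
      (Measure.pi fun _ : Fin k => uniformPi) := by
  apply Integrable.mono' (integrable_const (1:ℝ))
  · apply Continuous.aestronglyMeasurable
    fun_prop
  · exact Filter.Eventually.of_forall fun x => pow_avg_abs_le hε hk x

end aux

theorem stmt_2 (d : ℕ) (hd : 2 ≤ d) (ε : ℝ) (hε : ε ∈ Set.Ioo (0 : ℝ) 1)
    (n : ℕ) (hn : Even n) :
    ∫ θ : Fin d → ℝ,
        ((1 / (d : ℝ)) * ∑ i, (ε * Real.cos (θ i) + 1 - ε)) ^ n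
        ∂(Measure.pi fun _ : Fin d => uniformPi)
      ≤ ∫ θ : Fin (d - 1) → ℝ,
        ((1 / ((d : ℝ) - 1)) * ∑ i, (ε * Real.cos (θ i) + 1 - ε)) ^ n
        ∂(Measure.pi fun _ : Fin (d - 1) => uniformPi) := by
  obtain ⟨m, rfl⟩ : ∃ m, d = m + 2 := ⟨d - 2, by omega⟩
  have hcast : ((m + 2 : ℕ) : ℝ) - 1 = ((m + 1 : ℕ) : ℝ) := by push_cast; ring
  show (∫ θ : Fin (m + 2) → ℝ,
        ((1 / ((m + 2 : ℕ) : ℝ)) * ∑ i, (ε * Real.cos (θ i) + 1 - ε)) ^ n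
        ∂(Measure.pi fun _ : Fin (m + 2) => uniformPi))
      ≤ ∫ θ : Fin (m + 1) → ℝ,
        ((1 / (((m + 2 : ℕ) : ℝ) - 1)) * ∑ i, (ε * Real.cos (θ i) + 1 - ε)) ^ n
        ∂(Measure.pi fun _ : Fin (m + 1) => uniformPi)
  rw [hcast]
  -- notation
  have hm1 : (m + 1 : ℕ) ≠ 0 := by omega
  have hm2 : (m + 2 : ℕ) ≠ 0 := by omega
  have hm1R : (0:ℝ) < ((m + 1 : ℕ) : ℝ) := by exact_mod_cast Nat.pos_of_ne_zero hm1
  have hm2R : (0:ℝ) < ((m + 2 : ℕ) : ℝ) := by exact_mod_cast Nat.pos_of_ne_zero hm2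
  set μ2 : Measure (Fin (m + 2) → ℝ) := Measure.pi fun _ => uniformPi with hμ2
  set μ1 : Measure (Fin (m + 1) → ℝ) := Measure.pi fun _ => uniformPi with hμ1
  -- the (d-1)-average raised to n, as a function of d coordinates via succAbove j
  set Fj : Fin (m + 2) → (Fin (m + 2) → ℝ) → ℝ := fun j θ =>
    ((1 / ((m + 1 : ℕ) : ℝ)) * ∑ i : Fin (m + 1),
      (ε * Real.cos (θ (j.succAbove i)) + 1 - ε)) ^ n with hFj
  -- Step 1: projection identity
  have proj : ∀ j : Fin (m + 2),
      (∫ θ, Fj j θ ∂μ2)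
        = ∫ x : Fin (m + 1) → ℝ,
            ((1 / ((m + 1 : ℕ) : ℝ)) * ∑ i, (ε * Real.cos (x i) + 1 - ε)) ^ n ∂μ1 := by
    intro j
    have hmp := measurePreserving_piFinSuccAbove (fun _ : Fin (m + 2) => uniformPi) j
    have hcomp := hmp.integral_comp
      (MeasurableEquiv.piFinSuccAbove (fun _ : Fin (m + 2) => ℝ) j).measurableEmbedding
      (fun p : ℝ × (Fin (m + 1) → ℝ) =>
        ((1 / ((m + 1 : ℕ) : ℝ)) * ∑ i, (ε * Real.cos (p.2 i) + 1 - ε)) ^ n)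
    have hsnd : Measure.map Prod.snd (uniformPi.prod μ1) = μ1 := by
      rw [Measure.map_snd_prod]; simp
    have hmeas : AEStronglyMeasurable
        (fun x : Fin (m + 1) → ℝ =>
          ((1 / ((m + 1 : ℕ) : ℝ)) * ∑ i, (ε * Real.cos (x i) + 1 - ε)) ^ n)
        (Measure.map Prod.snd (uniformPi.prod μ1)) := by
      apply Continuous.aestronglyMeasurable
      fun_prop
    have heq : (∫ θ, Fj j θ ∂μ2)
        = ∫ p : ℝ × (Fin (m + 1) → ℝ),
            ((1 / ((m + 1 : ℕ) : ℝ)) * ∑ i, (ε * Real.cos (p.2 i) + 1 - ε)) ^ n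
            ∂(uniformPi.prod μ1) := by
      rw [← hcomp]
      rfl
    rw [heq]
    conv_rhs => rw [← hsnd]
    rw [integral_map measurable_snd.aemeasurable hmeas]
  -- Step 2: pointwise convexity inequality
  have pointwise : ∀ θ : Fin (m + 2) → ℝ,
      ((1 / ((m + 2 : ℕ) : ℝ)) * ∑ i, (ε * Real.cos (θ i) + 1 - ε)) ^ n
        ≤ ∑ j : Fin (m + 2), (1 / ((m + 2 : ℕ) : ℝ)) * Fj j θ := by
    intro θ
    have hconv : ConvexOn ℝ Set.univ fun x : ℝ => x ^ n := hn.convexOn_pow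
    have h₀ : ∀ j ∈ (Finset.univ : Finset (Fin (m + 2))),
        (0:ℝ) ≤ 1 / ((m + 2 : ℕ) : ℝ) := fun _ _ => by positivity
    have h₁ : ∑ _j : Fin (m + 2), (1 / ((m + 2 : ℕ) : ℝ)) = 1 := by
      rw [Finset.sum_const]
      simp only [Finset.card_univ, Fintype.card_fin, nsmul_eq_mul]
      field_simp
    have key := hconv.map_sum_le (t := Finset.univ) h₀ h₁
      (fun j _ => Set.mem_univ _)
      (p := fun j : Fin (m + 2) =>
        (1 / ((m + 1 : ℕ) : ℝ)) * ∑ i : Fin (m + 1),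
          (ε * Real.cos (θ (j.succAbove i)) + 1 - ε))
    have hsum : ∀ j : Fin (m + 2),
        (∑ i : Fin (m + 1), (ε * Real.cos (θ (j.succAbove i)) + 1 - ε))
          = (∑ k, (ε * Real.cos (θ k) + 1 - ε)) - (ε * Real.cos (θ j) + 1 - ε) := by
      intro j
      have h := Fin.sum_univ_succAbove (fun k => ε * Real.cos (θ k) + 1 - ε) j
      linarith
    have hz : (∑ j : Fin (m + 2), (1 / ((m + 2 : ℕ) : ℝ)) •
          ((1 / ((m + 1 : ℕ) : ℝ)) * ∑ i : Fin (m + 1),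
            (ε * Real.cos (θ (j.succAbove i)) + 1 - ε)))
        = (1 / ((m + 2 : ℕ) : ℝ)) * ∑ i, (ε * Real.cos (θ i) + 1 - ε) := by
      simp only [smul_eq_mul, hsum]
      rw [← Finset.mul_sum, ← Finset.mul_sum, Finset.sum_sub_distrib, Finset.sum_const]
      simp only [Finset.card_univ, Fintype.card_fin, nsmul_eq_mul]
      have hm1R' : ((m + 1 : ℕ) : ℝ) ≠ 0 := ne_of_gt hm1R
      have hm2R' : ((m + 2 : ℕ) : ℝ) ≠ 0 := ne_of_gt hm2R
      have hc : ((m + 2 : ℕ) : ℝ) - 1 = ((m + 1 : ℕ) : ℝ) := hcast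
      field_simp
      push_cast; ring
    rw [hz] at key
    calc ((1 / ((m + 2 : ℕ) : ℝ)) * ∑ i, (ε * Real.cos (θ i) + 1 - ε)) ^ n
        ≤ ∑ j : Fin (m + 2), (1 / ((m + 2 : ℕ) : ℝ)) •
            (((1 / ((m + 1 : ℕ) : ℝ)) * ∑ i : Fin (m + 1),
              (ε * Real.cos (θ (j.succAbove i)) + 1 - ε)) ^ n) := key
      _ = ∑ j : Fin (m + 2), (1 / ((m + 2 : ℕ) : ℝ)) * Fj j θ := by
          simp [hFj, smul_eq_mul]
  -- Step 3: integrability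
  have intL : Integrable (fun θ : Fin (m + 2) → ℝ =>
      ((1 / ((m + 2 : ℕ) : ℝ)) * ∑ i, (ε * Real.cos (θ i) + 1 - ε)) ^ n) μ2 :=
    integrable_pow_avg hε hm2
  have intFj : ∀ j : Fin (m + 2), Integrable (fun θ => Fj j θ) μ2 := by
    intro j
    apply Integrable.mono' (integrable_const (1:ℝ))
    · apply Continuous.aestronglyMeasurable
      simp only [hFj]
      fun_prop
    · exact Filter.Eventually.of_forall fun θ =>
        pow_avg_abs_le hε hm1 (fun i => θ (j.succAbove i))
  have intSum : Integrable (fun θ : Fin (m + 2) → ℝ =>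
      ∑ j : Fin (m + 2), (1 / ((m + 2 : ℕ) : ℝ)) * Fj j θ) μ2 :=
    integrable_finset_sum _ fun j _ => (intFj j).const_mul _
  -- Conclusion
  calc (∫ θ, ((1 / ((m + 2 : ℕ) : ℝ)) * ∑ i, (ε * Real.cos (θ i) + 1 - ε)) ^ n ∂μ2)
      ≤ ∫ θ, ∑ j : Fin (m + 2), (1 / ((m + 2 : ℕ) : ℝ)) * Fj j θ ∂μ2 :=
        integral_mono intL intSum pointwise
    _ = ∑ j : Fin (m + 2), ∫ θ, (1 / ((m + 2 : ℕ) : ℝ)) * Fj j θ ∂μ2 :=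
        integral_finset_sum _ fun j _ => (intFj j).const_mul _
    _ = ∑ j : Fin (m + 2), (1 / ((m + 2 : ℕ) : ℝ)) * ∫ θ, Fj j θ ∂μ2 := by
        simp_rw [integral_const_mul]
    _ = ∑ _j : Fin (m + 2), (1 / ((m + 2 : ℕ) : ℝ)) *
          ∫ x : Fin (m + 1) → ℝ,
            ((1 / ((m + 1 : ℕ) : ℝ)) * ∑ i, (ε * Real.cos (x i) + 1 - ε)) ^ n ∂μ1 := by
        exact Finset.sum_congr rfl fun j _ => by rw [proj j]
    _ = ∫ x : Fin (m + 1) → ℝ,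
          ((1 / ((m + 1 : ℕ) : ℝ)) * ∑ i, (ε * Real.cos (x i) + 1 - ε)) ^ n ∂μ1 := by
        rw [Finset.sum_const]
        simp only [Finset.card_univ, Fintype.card_fin, nsmul_eq_mul]
        field_simp
end

section
/- Under the same hypotheses (i)–(iii) as before, if sup_{β∈J} |E[X_n(β)] − E[X(β)]| → 0 as n → ∞, then the joint family (X_n(β))_{n≥1, β∈J} is uniformly integrable. -/
open MeasureTheory

/-- Uniform integrability of a family of nonnegative random variables, in the classical
sense: `sup_i E[X i · 1_{X i ≥ C}]` can be made arbitrarily small for large `C`. -/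
def UnifIntFam {Ω I : Type*} [MeasurableSpace Ω] (P : Measure Ω) (X : I → Ω → ℝ) : Prop :=
  ∀ ε > (0 : ℝ), ∃ C : ℝ, ∀ i : I, ∫ ω in {ω | C ≤ X i ω}, X i ω ∂P ≤ ε

section Aux
set_option linter.unusedSectionVars false
set_option linter.unusedVariables false
variable {Ω : Type*} {m0 : MeasurableSpace Ω} {P : Measure Ω} [IsProbabilityMeasure P]

-- aux1: monotone in C
lemma aux1 {f : Ω → ℝ} (hf : Integrable f P) (hnn : ∀ ω, 0 ≤ f ω) {C C' : ℝ} (h : C' ≤ C) :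
    ∫ ω in {ω | C ≤ f ω}, f ω ∂P ≤ ∫ ω in {ω | C' ≤ f ω}, f ω ∂P := by
  refine setIntegral_mono_set hf.integrableOn (Filter.Eventually.of_forall fun ω => hnn ω) ?_
  exact Filter.Eventually.of_forall fun ω hω => le_trans h hω

-- aux2: ∫_{C ≤ f} f ≤ 2 ∫ (f - C/2)^+
lemma aux2 {f : Ω → ℝ} (hf : Integrable f P) (hnn : ∀ ω, 0 ≤ f ω) (C : ℝ) :
    ∫ ω in {ω | C ≤ f ω}, f ω ∂P ≤ 2 * ∫ ω, max (f ω - C/2) 0 ∂P := by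
  have hg : Integrable (fun ω => max (f ω - C/2) 0) P :=
    (hf.sub (integrable_const _)).pos_part
  have hA : NullMeasurableSet {ω | C ≤ f ω} P :=
    aestronglyMeasurable_const.nullMeasurableSet_le hf.aestronglyMeasurable
  calc ∫ ω in {ω | C ≤ f ω}, f ω ∂P
      ≤ ∫ ω in {ω | C ≤ f ω}, 2 * max (f ω - C/2) 0 ∂P := by
        refine integral_mono_ae hf.integrableOn (hg.const_mul 2).integrableOn ?_
        filter_upwards [ae_restrict_mem₀ hA] with ω hω
        have : (C : ℝ) ≤ f ω := hω
        rcases le_or_gt 0 (f ω - C/2) with h | h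
        · rw [max_eq_left h]; linarith
        · rw [max_eq_right h.le]; linarith [hnn ω]
    _ ≤ ∫ ω, 2 * max (f ω - C/2) 0 ∂P := by
        refine setIntegral_le_integral (hg.const_mul 2) ?_
        exact Filter.Eventually.of_forall fun ω => by positivity
    _ = 2 * ∫ ω, max (f ω - C/2) 0 ∂P := by rw [integral_const_mul]

-- aux3: ∫ (f - C)^+ ≤ ∫_{C ≤ f} f  (for C ≥ 0, f nonneg)
lemma aux3 {f : Ω → ℝ} (hf : Integrable f P) (hnn : ∀ ω, 0 ≤ f ω) {C : ℝ} (hC : 0 ≤ C) :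
    ∫ ω, max (f ω - C) 0 ∂P ≤ ∫ ω in {ω | C ≤ f ω}, f ω ∂P := by
  have hg : Integrable (fun ω => max (f ω - C) 0) P := (hf.sub (integrable_const _)).pos_part
  have hA : NullMeasurableSet {ω | C ≤ f ω} P :=
    aestronglyMeasurable_const.nullMeasurableSet_le hf.aestronglyMeasurable
  rw [← integral_add_compl₀ hA hg]
  have h2 : ∫ ω in {ω | C ≤ f ω}ᶜ, max (f ω - C) 0 ∂P = 0 := by
    refine integral_eq_zero_of_ae ?_
    filter_upwards [ae_restrict_mem₀ hA.compl] with ω hω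
    have : ¬ (C ≤ f ω) := hω
    rw [max_eq_right (by linarith [not_le.mp this])]; rfl
  rw [h2, add_zero]
  refine integral_mono_ae hg.integrableOn hf.integrableOn ?_
  filter_upwards [ae_restrict_mem₀ hA] with ω hω
  have : (C : ℝ) ≤ f ω := hω
  rcases le_or_gt 0 (f ω - C) with h | h
  · rw [max_eq_left h]; linarith
  · rw [max_eq_right h.le]; exact hnn ω

-- aux4: min-difference bound
lemma aux4 {f g : Ω → ℝ} (hf : Integrable f P) (hg : Integrable g P)
    (hfn : ∀ ω, 0 ≤ f ω) {C εp δ : ℝ} (hC : 0 ≤ C) (hεp : 0 ≤ εp) (hδ : 0 ≤ δ)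
    (hP : P {ω | εp < |f ω - g ω|} ≤ ENNReal.ofReal δ) :
    ∫ ω, min (g ω) C ∂P - ∫ ω, min (f ω) C ∂P ≤ εp + C * δ := by
  set A := {ω | εp < |f ω - g ω|} with hAdef
  have hA : NullMeasurableSet A P := by
    exact nullMeasurableSet_lt aemeasurable_const (hf.sub hg).norm.aemeasurable
  have hmf : Integrable (fun ω => min (f ω) C) P := hf.inf (integrable_const C)
  have hmg : Integrable (fun ω => min (g ω) C) P := hg.inf (integrable_const C)
  have hh : Integrable (fun ω => min (g ω) C - min (f ω) C) P := hmg.sub hmf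
  have key : ∫ ω, (min (g ω) C - min (f ω) C) ∂P ≤ εp + C * δ := by
    rw [← integral_add_compl₀ hA hh]
    have h1 : ∫ ω in A, (min (g ω) C - min (f ω) C) ∂P ≤ C * δ := by
      calc ∫ ω in A, (min (g ω) C - min (f ω) C) ∂P
          ≤ ∫ _ω in A, C ∂P := by
            refine integral_mono_ae hh.integrableOn ((integrableOn_const_iff).mpr (Or.inr (measure_lt_top _ _))) ?_
            refine Filter.Eventually.of_forall fun ω => ?_
            show min (g ω) C - min (f ω) C ≤ C
            have h1 : min (g ω) C ≤ C := min_le_right _ _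
            have h2 : 0 ≤ min (f ω) C := le_min (hfn ω) hC
            linarith
        _ = (P A).toReal * C := by rw [setIntegral_const]; rfl
        _ ≤ δ * C := by
            refine mul_le_mul_of_nonneg_right ?_ hC
            exact ENNReal.toReal_le_of_le_ofReal hδ hP
        _ = C * δ := mul_comm _ _
    have h2 : ∫ ω in Aᶜ, (min (g ω) C - min (f ω) C) ∂P ≤ εp := by
      calc ∫ ω in Aᶜ, (min (g ω) C - min (f ω) C) ∂P
          ≤ ∫ _ω in Aᶜ, εp ∂P := by
            refine integral_mono_ae hh.integrableOn ((integrableOn_const_iff).mpr (Or.inr (measure_lt_top _ _))) ?_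
            filter_upwards [ae_restrict_mem₀ hA.compl] with ω hω
            show min (g ω) C - min (f ω) C ≤ εp
            have hle : |f ω - g ω| ≤ εp := not_lt.mp hω
            have := abs_le.mp hle
            rcases le_total (g ω) C with h | h <;> rcases le_total (f ω) C with h' | h' <;>
              simp [min_eq_left, min_eq_right, h, h'] <;> linarith [min_le_right (g ω) C]
        _ = (P Aᶜ).toReal * εp := by rw [setIntegral_const]; rfl
        _ ≤ 1 * εp := by
            refine mul_le_mul_of_nonneg_right ?_ hεp
            exact ENNReal.toReal_le_of_le_ofReal zero_le_one (by simpa using prob_le_one)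
        _ = εp := one_mul _
    linarith
  have := integral_sub hmg hmf
  rw [← this]; linarith [key]

lemma aux5 {f : Ω → ℝ} (hf : Integrable f P) (C : ℝ) :
    ∫ ω, max (f ω - C) 0 ∂P = ∫ ω, f ω ∂P - ∫ ω, min (f ω) C ∂P := by
  have hmin : Integrable (fun ω => min (f ω) C) P := hf.inf (integrable_const C)
  rw [← integral_sub hf hmin]
  congr 1; ext ω
  rcases le_total (f ω) C with h | h
  · simp [min_eq_left h, max_eq_right (show f ω - C ≤ 0 by linarith)]
  · simp [min_eq_right h, max_eq_left (show (0:ℝ) ≤ f ω - C by linarith)]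


end Aux

theorem stmt_10 {Ω J : Type*} {m0 : MeasurableSpace Ω} (P : Measure Ω) [IsProbabilityMeasure P]
    (X : ℕ → J → Ω → ℝ) (X0 : J → Ω → ℝ)
    (hnn : ∀ n β ω, 0 ≤ X n β ω) (h0nn : ∀ β ω, 0 ≤ X0 β ω)
    (hint : ∀ n β, Integrable (X n β) P) (h0int : ∀ β, Integrable (X0 β) P)
    -- (i) for each n, (X n β)_β is uniformly integrable
    (hui_n : ∀ n, UnifIntFam P (X n))
    -- (ii) (X0 β)_β is uniformly integrable
    (hui_0 : UnifIntFam P X0)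
    -- (iii) X_n(β) → X0(β) in probability, uniformly in β
    (hconv : ∀ ε > (0 : ℝ), ∀ δ > (0 : ℝ), ∃ N : ℕ, ∀ n ≥ N, ∀ β : J,
      P {ω | ε < |X n β ω - X0 β ω|} ≤ ENNReal.ofReal δ)
    -- the expectations converge uniformly in β
    (hexp : ∀ ε > (0 : ℝ), ∃ N : ℕ, ∀ n ≥ N, ∀ β : J,
      |∫ ω, X n β ω ∂P - ∫ ω, X0 β ω ∂P| ≤ ε) :
    UnifIntFam P (fun p : ℕ × J => X p.1 p.2) := by
  intro ε hε
  have hε8 : (0:ℝ) < ε / 8 := by linarith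
  obtain ⟨C0', hC0'⟩ := hui_0 (ε/8) hε8
  set C0 : ℝ := max C0' 1 with hC0def
  have hC0pos : (0:ℝ) < C0 := lt_of_lt_of_le one_pos (le_max_right _ _)
  have hC0 : ∀ β, ∫ ω in {ω | C0 ≤ X0 β ω}, X0 β ω ∂P ≤ ε/8 := fun β =>
    (aux1 (h0int β) (h0nn β) (le_max_left _ _)).trans (hC0' β)
  have hδpos : (0:ℝ) < ε/8/C0 := div_pos hε8 hC0pos
  obtain ⟨N1, hN1⟩ := hexp (ε/8) hε8
  obtain ⟨N2, hN2⟩ := hconv (ε/8) hε8 (ε/8/C0) hδpos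
  set N : ℕ := max N1 N2 with hNdef
  choose Cf hCf using fun n => hui_n n ε hε
  refine ⟨max (2*C0) (Finset.fold max 0 Cf (Finset.range N)), ?_⟩
  rintro ⟨n, β⟩
  show ∫ ω in {ω | max (2*C0) (Finset.fold max 0 Cf (Finset.range N)) ≤ X n β ω},
      X n β ω ∂P ≤ ε
  rcases lt_or_ge n N with hn | hn
  · have hle : Cf n ≤ max (2*C0) (Finset.fold max 0 Cf (Finset.range N)) :=
      le_trans (by exact (Finset.le_fold_max (Cf n)).mpr (Or.inr ⟨n, Finset.mem_range.mpr hn, le_refl _⟩))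
        (le_max_right _ _)
    exact (aux1 (hint n β) (hnn n β) hle).trans (hCf n β)
  · -- n ≥ N
    have hn1 : N1 ≤ n := le_trans (le_max_left _ _) hn
    have hn2 : N2 ≤ n := le_trans (le_max_right _ _) hn
    have key : ∫ ω, max (X n β ω - C0) 0 ∂P ≤ 4 * (ε/8) := by
      have e1 : ∫ ω, X n β ω ∂P - ∫ ω, X0 β ω ∂P ≤ ε/8 :=
        (abs_le.mp (hN1 n hn1 β)).2
      have e2 : ∫ ω, max (X0 β ω - C0) 0 ∂P ≤ ε/8 :=
        (aux3 (h0int β) (h0nn β) hC0pos.le).trans (hC0 β)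
      have e3 : ∫ ω, min (X0 β ω) C0 ∂P - ∫ ω, min (X n β ω) C0 ∂P
          ≤ ε/8 + C0 * (ε/8/C0) :=
        aux4 (hint n β) (h0int β) (hnn n β) hC0pos.le hε8.le hδpos.le (hN2 n hn2 β)
      have e4 : C0 * (ε/8/C0) = ε/8 := by field_simp
      rw [aux5 (hint n β) C0]
      rw [aux5 (h0int β) C0] at e2
      linarith
    calc ∫ ω in {ω | max (2*C0) (Finset.fold max 0 Cf (Finset.range N)) ≤ X n β ω},
          X n β ω ∂P
        ≤ ∫ ω in {ω | 2*C0 ≤ X n β ω}, X n β ω ∂P :=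
          aux1 (hint n β) (hnn n β) (le_max_left _ _)
      _ ≤ 2 * ∫ ω, max (X n β ω - (2*C0)/2) 0 ∂P := aux2 (hint n β) (hnn n β) _
      _ = 2 * ∫ ω, max (X n β ω - C0) 0 ∂P := by rw [show (2*C0)/2 = C0 by ring]
      _ ≤ 2 * (4 * (ε/8)) := by linarith [key]
      _ = ε := by ring
end

section
/- In the setting of Kac's formula: with θ measure-preserving, D measurable with P(D) > 0, T the first return time to D, P̂ = P(·|D), if Ê[T] < ∞ then Ê[T]·E[T] = Ê[(T^2 + T)/2] where on the left E[T] = ∫ T dP and on the right the expectation is under P̂; in particular, if E[T] < ∞ then Ê[T^2] = 2·E[T]·Ê[T] − Ê[T] < ∞. -/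
open MeasureTheory Function ProbabilityTheory
open scoped ENNReal

namespace KacAux12

variable {Ω : Type*} {m0 : MeasurableSpace Ω}

/-- The set of points that do not visit `D` at any time in `[1, n]`. -/
def E (θ : Ω → Ω) (D : Set Ω) (n : ℕ) : Set Ω := {ω | ∀ j, 1 ≤ j → j ≤ n → θ^[j] ω ∉ D}

lemma E_zero (θ : Ω → Ω) (D : Set Ω) : E θ D 0 = Set.univ := by
  ext ω
  simp only [E, Set.mem_setOf_eq, Set.mem_univ, iff_true]
  intro j h1 h2
  exact absurd (h1.trans h2) (by norm_num)

lemma measurableSet_E {θ : Ω → Ω} (hθ : Measurable θ) {D : Set Ω} (hD : MeasurableSet D)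
    (n : ℕ) : MeasurableSet (E θ D n) := by
  have : E θ D n = ⋂ (j : ℕ) (_ : 1 ≤ j) (_ : j ≤ n), θ^[j] ⁻¹' Dᶜ := by
    ext ω; simp [E]
  rw [this]
  exact MeasurableSet.iInter fun j => MeasurableSet.iInter fun _ =>
    MeasurableSet.iInter fun _ => (hθ.iterate j) hD.compl

lemma preimage_E (θ : Ω → Ω) (D : Set Ω) (n : ℕ) :
    θ ⁻¹' (Dᶜ ∩ E θ D n) = E θ D (n + 1) := by
  ext ω
  simp only [Set.mem_preimage, Set.mem_inter_iff, Set.mem_compl_iff, E, Set.mem_setOf_eq]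
  constructor
  · rintro ⟨h0, h⟩ j h1 hj
    obtain ⟨i, rfl⟩ : ∃ i, j = i + 1 := ⟨j - 1, by omega⟩
    rw [iterate_succ_apply]
    rcases Nat.eq_zero_or_pos i with hi | hi
    · subst hi; simpa using h0
    · exact h i hi (by omega)
  · intro h
    refine ⟨by simpa using h 1 le_rfl (by omega), fun j h1 hj => ?_⟩
    have := h (j + 1) (by omega) (by omega)
    rwa [iterate_succ_apply] at this

lemma E_antitone (θ : Ω → Ω) (D : Set Ω) : Antitone (E θ D) := by
  intro a b hab ω hω j h1 hj
  exact hω j h1 (hj.trans hab)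

section T

variable {θ : Ω → Ω} {D : Set Ω} {T : Ω → ℕ}
variable (hTdef : ∀ ω, T ω = sInf {n : ℕ | 0 < n ∧ θ^[n] ω ∈ D})

include hTdef

/-- On the set of points with nonempty hitting set, `ω ∈ E n ↔ T ω > n`. -/
lemma mem_E_iff {ω : Ω} (hne : {n : ℕ | 0 < n ∧ θ^[n] ω ∈ D}.Nonempty) (k : ℕ) :
    ω ∈ E θ D k ↔ k < T ω := by
  have hmem := Nat.sInf_mem hne
  rw [← hTdef] at hmem
  constructor
  · intro hE
    by_contra hc
    push_neg at hc
    exact hE (T ω) hmem.1 hc hmem.2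
  · intro hk j h1 hj hD'
    have : j < T ω := lt_of_le_of_lt hj hk
    rw [hTdef] at this
    exact Nat.notMem_of_lt_sInf this ⟨h1, hD'⟩

lemma T_shift {ω : Ω} (hne : {n : ℕ | 0 < n ∧ θ^[n] ω ∈ D}.Nonempty) {k : ℕ}
    (hk : k < T ω) : T (θ^[k] ω) = T ω - k := by
  have hmem := Nat.sInf_mem hne
  rw [← hTdef] at hmem
  have hset : ∀ n : ℕ, θ^[n] (θ^[k] ω) = θ^[n + k] ω := fun n =>
    (Function.iterate_add_apply θ n k ω).symm
  have hmem2 : T ω - k ∈ {n : ℕ | 0 < n ∧ θ^[n] (θ^[k] ω) ∈ D} := by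
    refine ⟨by omega, ?_⟩
    rw [hset]
    have : T ω - k + k = T ω := by omega
    rw [this]
    exact hmem.2
  rw [hTdef (θ^[k] ω)]
  refine le_antisymm (Nat.sInf_le hmem2) (le_csInf ⟨_, hmem2⟩ ?_)
  rintro n ⟨hn0, hnD⟩
  rw [hset] at hnD
  have : n + k ∈ {m : ℕ | 0 < m ∧ θ^[m] ω ∈ D} := ⟨by omega, hnD⟩
  have := Nat.sInf_le this
  rw [← hTdef] at this
  omega

lemma measurable_T (hθ : Measurable θ) (hD : MeasurableSet D) : Measurable T := by
  apply measurable_to_countable'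
  intro n
  match n with
  | 0 =>
    have : T ⁻¹' {0} = ⋂ (j : ℕ), {ω | ¬(0 < j ∧ θ^[j] ω ∈ D)} := by
      ext ω
      simp only [Set.mem_preimage, Set.mem_singleton_iff, hTdef, Set.mem_iInter,
        Set.mem_setOf_eq]
      rw [Nat.sInf_eq_zero]
      constructor
      · rintro (h | h)
        · exact absurd h.1 (lt_irrefl 0)
        · intro j hj
          rw [Set.eq_empty_iff_forall_notMem] at h
          exact h j hj
      · intro h
        right
        ext j
        simp only [Set.mem_setOf_eq, Set.mem_empty_iff_false, iff_false]
        exact h j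
    rw [this]
    exact MeasurableSet.iInter fun j => by
      by_cases hj : 0 < j
      · have : {ω | ¬(0 < j ∧ θ^[j] ω ∈ D)} = θ^[j] ⁻¹' Dᶜ := by
          ext ω; simp [hj]
        rw [this]; exact (hθ.iterate j) hD.compl
      · have : {ω | ¬(0 < j ∧ θ^[j] ω ∈ D)} = Set.univ := by
          ext ω; simp [hj]
        rw [this]; exact MeasurableSet.univ
  | n + 1 =>
    have key : ∀ ω, T ω = n + 1 ↔ θ^[n + 1] ω ∈ D ∧ ω ∈ E θ D n := by
      intro ω
      constructor
      · intro h
        have hne : {m : ℕ | 0 < m ∧ θ^[m] ω ∈ D}.Nonempty := by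
          by_contra hc
          rw [Set.not_nonempty_iff_eq_empty] at hc
          rw [hTdef, hc, Nat.sInf_empty] at h
          omega
        have hmem := Nat.sInf_mem hne
        rw [← hTdef, h] at hmem
        refine ⟨hmem.2, fun j h1 hj hD' => ?_⟩
        have hlt : j < sInf {m : ℕ | 0 < m ∧ θ^[m] ω ∈ D} := by rw [← hTdef, h]; omega
        exact Nat.notMem_of_lt_sInf hlt ⟨by omega, hD'⟩
      · rintro ⟨h1, h2⟩
        have hmem : n + 1 ∈ {m : ℕ | 0 < m ∧ θ^[m] ω ∈ D} := ⟨Nat.succ_pos n, h1⟩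
        rw [hTdef]
        refine le_antisymm (Nat.sInf_le hmem) ?_
        by_contra hc
        push_neg at hc
        have hmem2 := Nat.sInf_mem ⟨_, hmem⟩
        exact h2 _ hmem2.1 (by omega) hmem2.2
    have : T ⁻¹' {n + 1} = θ^[n + 1] ⁻¹' D ∩ E θ D n := by
      ext ω
      simp only [Set.mem_preimage, Set.mem_singleton_iff, Set.mem_inter_iff]
      exact key ω
    rw [this]
    exact ((hθ.iterate (n + 1)) hD).inter (measurableSet_E hθ hD n)

end T

/-- The basic sweeping-out identity for bounded nonnegative `f`. -/
lemma sum_identity (P : Measure Ω) [IsProbabilityMeasure P] {θ : Ω → Ω}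
    (hθ : MeasurePreserving θ P P) {D : Set Ω} (hD : MeasurableSet D)
    (hTfin : ∀ᵐ ω ∂P, ∃ n : ℕ, 0 < n ∧ θ^[n] ω ∈ D)
    (f : Ω → ℝ≥0∞) (hf : Measurable f) (C : ℝ≥0∞) (hC : C ≠ ⊤) (hfC : ∀ ω, f ω ≤ C) :
    ∫⁻ ω, f ω ∂P
      = ∫⁻ ω, ∑' k : ℕ, (D ∩ E θ D k).indicator (fun ω' => f (θ^[k] ω')) ω ∂P := by
  have hθm : Measurable θ := hθ.measurable
  set w : ℕ → ℝ≥0∞ := fun n => ∫⁻ ω, (E θ D n).indicator (fun ω' => f (θ^[n] ω')) ω ∂P with hw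
  set ν : ℕ → ℝ≥0∞ :=
    fun n => ∫⁻ ω, (D ∩ E θ D n).indicator (fun ω' => f (θ^[n] ω')) ω ∂P with hν
  have hmeasind : ∀ (s : Set Ω), MeasurableSet s → ∀ n : ℕ,
      Measurable (s.indicator (fun ω' => f (θ^[n] ω'))) := fun s hs n =>
    (hf.comp (hθm.iterate n)).indicator hs
  have step : ∀ n, w n = ν n + w (n + 1) := by
    intro n
    have hEn := measurableSet_E hθm hD n
    have hcomp : w (n + 1)
        = ∫⁻ ω, (Dᶜ ∩ E θ D n).indicator (fun ω' => f (θ^[n] ω')) ω ∂P := by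
      show (∫⁻ ω, (E θ D (n + 1)).indicator (fun ω' => f (θ^[n + 1] ω')) ω ∂P) = _
      rw [← hθ.lintegral_comp (hmeasind (Dᶜ ∩ E θ D n) (hD.compl.inter hEn) n)]
      apply lintegral_congr
      intro ω
      by_cases h : θ ω ∈ Dᶜ ∩ E θ D n
      · have hω : ω ∈ E θ D (n + 1) := by rw [← preimage_E]; exact h
        rw [Set.indicator_of_mem h, Set.indicator_of_mem hω, iterate_succ_apply]
      · have hω : ω ∉ E θ D (n + 1) := by rw [← preimage_E]; exact h
        rw [Set.indicator_of_notMem h, Set.indicator_of_notMem hω]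
    show (∫⁻ ω, (E θ D n).indicator (fun ω' => f (θ^[n] ω')) ω ∂P) = _
    rw [hcomp, hν]
    rw [← lintegral_add_left (hmeasind _ (hD.inter hEn) n)]
    apply lintegral_congr
    intro ω
    by_cases hωE : ω ∈ E θ D n
    · by_cases hωD : ω ∈ D
      · simp [Set.indicator_apply, Set.mem_inter_iff, hωE, hωD]
      · simp [Set.indicator_apply, Set.mem_inter_iff, hωE, hωD]
    · simp [Set.indicator_apply, Set.mem_inter_iff, hωE]
  have telescope : ∀ n, (∑ k ∈ Finset.range n, ν k) + w n = w 0 := by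
    intro n
    induction n with
    | zero => simp
    | succ n ih =>
      rw [Finset.sum_range_succ, add_assoc, ← step n, ih]
  have hwlim : Filter.Tendsto w Filter.atTop (nhds 0) := by
    have hub : ∀ n, w n ≤ C * P (E θ D n) := by
      intro n
      show (∫⁻ ω, (E θ D n).indicator (fun ω' => f (θ^[n] ω')) ω ∂P) ≤ _
      calc ∫⁻ ω, (E θ D n).indicator (fun ω' => f (θ^[n] ω')) ω ∂P
          ≤ ∫⁻ ω, (E θ D n).indicator (fun _ => C) ω ∂P := by
            apply lintegral_mono
            intro ω
            exact Set.indicator_le_indicator' (fun _ => hfC _)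
        _ = C * P (E θ D n) := lintegral_indicator_const (measurableSet_E hθm hD n) C
    have hInter : P (⋂ n, E θ D n) = 0 := by
      have hsub : (⋂ n, E θ D n) ⊆ {ω | ¬∃ n : ℕ, 0 < n ∧ θ^[n] ω ∈ D} := by
        intro ω hω
        rintro ⟨n, hn0, hnD⟩
        exact (Set.mem_iInter.1 hω n) n hn0 le_rfl hnD
      refine measure_mono_null hsub ?_
      rw [ae_iff] at hTfin
      exact hTfin
    have hPlim : Filter.Tendsto (fun n => P (E θ D n)) Filter.atTop
        (nhds (P (⋂ n, E θ D n))) :=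
      tendsto_measure_iInter_atTop
        (fun n => (measurableSet_E hθm hD n).nullMeasurableSet) (E_antitone θ D)
        ⟨0, measure_ne_top P _⟩
    rw [hInter] at hPlim
    have hClim : Filter.Tendsto (fun n => C * P (E θ D n)) Filter.atTop (nhds 0) := by
      have := ENNReal.Tendsto.const_mul (a := C) hPlim (Or.inr hC)
      simpa using this
    exact tendsto_of_tendsto_of_tendsto_of_le_of_le tendsto_const_nhds hClim
      (fun n => zero_le) hub
  have h1 : Filter.Tendsto (fun n => ∑ k ∈ Finset.range n, ν k) Filter.atTop
      (nhds (∑' k, ν k)) := ENNReal.tendsto_nat_tsum ν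
  have h2 := h1.add hwlim
  have h3 : (fun n => (∑ k ∈ Finset.range n, ν k) + w n) = fun _ => w 0 :=
    funext telescope
  rw [h3] at h2
  have h4 : w 0 = (∑' k, ν k) + 0 := tendsto_nhds_unique tendsto_const_nhds h2
  have hW0 : w 0 = ∫⁻ ω, f ω ∂P := by
    show (∫⁻ ω, (E θ D 0).indicator (fun ω' => f (θ^[0] ω')) ω ∂P) = _
    simp [E_zero]
  rw [← hW0, h4, add_zero, hν, ← lintegral_tsum
    (fun k => (hmeasind _ (hD.inter (measurableSet_E hθm hD k)) k).aemeasurable)]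

lemma gaussNat : ∀ t : ℕ, (∑ k ∈ Finset.range t, (t - k)) * 2 = t ^ 2 + t := by
  intro t
  induction t with
  | zero => simp
  | succ t ih =>
    have hstep : ∑ k ∈ Finset.range (t + 1), (t + 1 - k)
        = (∑ k ∈ Finset.range t, (t - k)) + (t + 1) := by
      rw [Finset.sum_range_succ]
      have : ∑ k ∈ Finset.range t, (t + 1 - k) = ∑ k ∈ Finset.range t, ((t - k) + 1) :=
        Finset.sum_congr rfl (fun k hk => by
          have := Finset.mem_range.1 hk; omega)
      rw [this, Finset.sum_add_distrib, Finset.sum_const, Finset.card_range, smul_eq_mul,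
        mul_one]
      omega
    rw [hstep, add_mul]
    rw [ih]
    ring
open scoped ENNReal in
lemma gaussCast (t : ℕ) :
    (∑ k ∈ Finset.range t, ((t - k : ℕ) : ℝ≥0∞)) = ((t : ℝ≥0∞) ^ 2 + t) / 2 := by
  have h := gaussNat t
  rw [← Nat.cast_sum, ENNReal.eq_div_iff (by norm_num) (by norm_num)]
  rw [mul_comm]
  norm_cast

end KacAux12

/-- In the Kac setting, `Ê[T]·E[T] = Ê[(T²+T)/2]`; in particular if `E[T] < ∞` then
`Ê[T²] = 2·E[T]·Ê[T] − Ê[T] < ∞`. -/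
theorem stmt_12 {Ω : Type*} {m0 : MeasurableSpace Ω} (P : Measure Ω) [IsProbabilityMeasure P]
    (θ : Ω → Ω) (hθ : MeasurePreserving θ P P) (hergodic : Ergodic θ P)
    (D : Set Ω) (hD : MeasurableSet D) (hDpos : 0 < P D)
    (T : Ω → ℕ) (hTdef : ∀ ω, T ω = sInf {n : ℕ | 0 < n ∧ θ^[n] ω ∈ D})
    (hTfin : ∀ᵐ ω ∂P, ∃ n : ℕ, 0 < n ∧ θ^[n] ω ∈ D)
    (hThat : ∫⁻ ω, (T ω : ENNReal) ∂(P[|D]) < ⊤) :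
    (∫⁻ ω, (T ω : ENNReal) ∂(P[|D])) * (∫⁻ ω, (T ω : ENNReal) ∂P)
        = ∫⁻ ω, ((T ω : ENNReal) ^ 2 + (T ω : ENNReal)) / 2 ∂(P[|D])
    ∧ (∫⁻ ω, (T ω : ENNReal) ∂P < ⊤ →
        (∫⁻ ω, (T ω : ENNReal) ^ 2 ∂(P[|D])
            = 2 * (∫⁻ ω, (T ω : ENNReal) ∂P) * (∫⁻ ω, (T ω : ENNReal) ∂(P[|D]))
              - ∫⁻ ω, (T ω : ENNReal) ∂(P[|D]))
          ∧ ∫⁻ ω, (T ω : ENNReal) ^ 2 ∂(P[|D]) < ⊤) := by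
  have hθm : Measurable θ := hθ.measurable
  have hT : Measurable T := KacAux12.measurable_T hTdef hθm hD
  have hTe : Measurable fun ω => (T ω : ℝ≥0∞) := measurable_from_nat.comp hT
  have hSae : ∀ᵐ ω ∂P, {n : ℕ | 0 < n ∧ θ^[n] ω ∈ D}.Nonempty := by
    filter_upwards [hTfin] with ω h
    exact h
  -- Kac's formula
  have hKac : ∫⁻ ω in D, (T ω : ℝ≥0∞) ∂P = 1 := by
    have h1 := KacAux12.sum_identity P hθ hD hTfin (fun _ => 1) measurable_const 1
      (by norm_num) (fun _ => le_rfl)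
    rw [lintegral_one, measure_univ] at h1
    have h2 : ∀ᵐ ω ∂P,
        (∑' k : ℕ, (D ∩ KacAux12.E θ D k).indicator (fun _ => (1 : ℝ≥0∞)) ω)
          = D.indicator (fun ω => (T ω : ℝ≥0∞)) ω := by
      filter_upwards [hSae] with ω hω
      by_cases hωD : ω ∈ D
      · have hterm : ∀ k : ℕ, (D ∩ KacAux12.E θ D k).indicator (fun _ => (1 : ℝ≥0∞)) ω
            = if k < T ω then 1 else 0 := by
          intro k
          by_cases hk : k < T ω
          · have hmem : ω ∈ D ∩ KacAux12.E θ D k :=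
              ⟨hωD, (KacAux12.mem_E_iff hTdef hω k).2 hk⟩
            rw [Set.indicator_of_mem hmem, if_pos hk]
          · rw [Set.indicator_of_notMem, if_neg hk]
            rintro ⟨-, hE⟩
            exact hk ((KacAux12.mem_E_iff hTdef hω k).1 hE)
        rw [Set.indicator_of_mem hωD, tsum_congr hterm,
          tsum_eq_sum (s := Finset.range (T ω)) (fun k hk => if_neg (by simpa using hk))]
        rw [Finset.sum_congr rfl (fun k hk => if_pos (Finset.mem_range.1 hk))]
        simp
      · rw [Set.indicator_of_notMem hωD,
          tsum_congr (fun k => Set.indicator_of_notMem (fun h => hωD h.1) _), tsum_zero]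
    rw [lintegral_congr_ae h2, lintegral_indicator hD] at h1
    exact h1.symm
  -- the key identity: ∫ T dP = ∫_D (T² + T)/2 dP
  have hmain : ∫⁻ ω, (T ω : ℝ≥0∞) ∂P
      = ∫⁻ ω in D, ((T ω : ℝ≥0∞) ^ 2 + T ω) / 2 ∂P := by
    set G : ℕ → Ω → ℝ≥0∞ := fun m ω => ∑' k : ℕ,
      (D ∩ KacAux12.E θ D k).indicator (fun ω' => min (T (θ^[k] ω') : ℝ≥0∞) m) ω with hG
    have hbdd : ∀ m : ℕ, ∫⁻ ω, min (T ω : ℝ≥0∞) m ∂P = ∫⁻ ω, G m ω ∂P := fun m =>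
      KacAux12.sum_identity P hθ hD hTfin (fun ω => min (T ω : ℝ≥0∞) m)
        (hTe.min measurable_const) m (ENNReal.natCast_ne_top m) (fun ω => min_le_right _ _)
    have hGmeas : ∀ m, Measurable (G m) := fun m =>
      Measurable.ennreal_tsum (fun k =>
        ((measurable_from_nat.comp (hT.comp (hθm.iterate k))).min measurable_const).indicator
          (hD.inter (KacAux12.measurableSet_E hθm hD k)))
    have hGmono : Monotone G := by
      intro m1 m2 h ω
      apply ENNReal.tsum_le_tsum
      intro k
      exact Set.indicator_le_indicator (min_le_min le_rfl (Nat.cast_le.mpr h))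
    have hLHS : (⨆ m : ℕ, ∫⁻ ω, min (T ω : ℝ≥0∞) m ∂P) = ∫⁻ ω, (T ω : ℝ≥0∞) ∂P := by
      rw [← lintegral_iSup (fun m => hTe.min measurable_const)
        (fun m1 m2 h ω => min_le_min le_rfl (Nat.cast_le.mpr h))]
      apply lintegral_congr
      intro ω
      apply le_antisymm (iSup_le fun m => min_le_left _ _)
      refine le_iSup_of_le (T ω) ?_
      simp
    have hptw : ∀ᵐ ω ∂P, (⨆ m, G m ω)
        = D.indicator (fun ω => ((T ω : ℝ≥0∞) ^ 2 + T ω) / 2) ω := by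
      filter_upwards [hSae] with ω hω
      by_cases hωD : ω ∈ D
      · have hterm : ∀ m k : ℕ,
            (D ∩ KacAux12.E θ D k).indicator (fun ω' => min (T (θ^[k] ω') : ℝ≥0∞) m) ω
              = if k < T ω then min ((T ω - k : ℕ) : ℝ≥0∞) m else 0 := by
          intro m k
          by_cases hk : k < T ω
          · have hmem : ω ∈ D ∩ KacAux12.E θ D k :=
              ⟨hωD, (KacAux12.mem_E_iff hTdef hω k).2 hk⟩
            rw [Set.indicator_of_mem hmem, if_pos hk, KacAux12.T_shift hTdef hω hk]
          · rw [Set.indicator_of_notMem, if_neg hk]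
            rintro ⟨-, hE⟩
            exact hk ((KacAux12.mem_E_iff hTdef hω k).1 hE)
        have hGm : ∀ m : ℕ, G m ω
            = ∑ k ∈ Finset.range (T ω), min ((T ω - k : ℕ) : ℝ≥0∞) m := by
          intro m
          show (∑' k : ℕ,
            (D ∩ KacAux12.E θ D k).indicator (fun ω' => min (T (θ^[k] ω') : ℝ≥0∞) m) ω) = _
          rw [tsum_congr (hterm m),
            tsum_eq_sum (s := Finset.range (T ω)) (fun k hk => if_neg (by simpa using hk))]
          exact Finset.sum_congr rfl (fun k hk => if_pos (Finset.mem_range.1 hk))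
        rw [Set.indicator_of_mem hωD]
        have hsup : (⨆ m, G m ω) = ∑ k ∈ Finset.range (T ω), ((T ω - k : ℕ) : ℝ≥0∞) := by
          apply le_antisymm
          · exact iSup_le fun m => (hGm m).le.trans
              (Finset.sum_le_sum (fun k _ => min_le_left _ _))
          · refine le_iSup_of_le (T ω) ?_
            rw [hGm (T ω)]
            refine le_of_eq (Finset.sum_congr rfl (fun k hk => ?_))
            exact (min_eq_left (Nat.cast_le.mpr (Nat.sub_le _ _))).symm
        rw [hsup, KacAux12.gaussCast]
      · rw [Set.indicator_of_notMem hωD]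
        have hzero : ∀ m : ℕ, G m ω = 0 := by
          intro m
          show (∑' k : ℕ,
            (D ∩ KacAux12.E θ D k).indicator (fun ω' => min (T (θ^[k] ω') : ℝ≥0∞) m) ω) = 0
          rw [tsum_congr (fun k => Set.indicator_of_notMem (fun h => hωD h.1) _), tsum_zero]
        simp [hzero]
    calc ∫⁻ ω, (T ω : ℝ≥0∞) ∂P
        = ⨆ m : ℕ, ∫⁻ ω, min (T ω : ℝ≥0∞) m ∂P := hLHS.symm
      _ = ⨆ m : ℕ, ∫⁻ ω, G m ω ∂P := iSup_congr hbdd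
      _ = ∫⁻ ω, (⨆ m, G m ω) ∂P := (lintegral_iSup hGmeas hGmono).symm
      _ = ∫⁻ ω, D.indicator (fun ω => ((T ω : ℝ≥0∞) ^ 2 + T ω) / 2) ω ∂P :=
          lintegral_congr_ae hptw
      _ = ∫⁻ ω in D, ((T ω : ℝ≥0∞) ^ 2 + T ω) / 2 ∂P := lintegral_indicator hD _
  -- conditional measure facts
  have hcond : ∀ g : Ω → ℝ≥0∞,
      ∫⁻ ω, g ω ∂(P[|D]) = (P D)⁻¹ * ∫⁻ ω in D, g ω ∂P := by
    intro g
    rw [ProbabilityTheory.cond, lintegral_smul_measure, smul_eq_mul]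
  have hhat : ∫⁻ ω, (T ω : ℝ≥0∞) ∂(P[|D]) = (P D)⁻¹ := by
    rw [hcond, hKac, mul_one]
  have hpart1 : (∫⁻ ω, (T ω : ENNReal) ∂(P[|D])) * (∫⁻ ω, (T ω : ENNReal) ∂P)
      = ∫⁻ ω, ((T ω : ENNReal) ^ 2 + (T ω : ENNReal)) / 2 ∂(P[|D]) := by
    rw [hhat, hcond, ← hmain]
  refine ⟨hpart1, fun hEfin => ?_⟩
  have hT2meas : Measurable fun ω => (T ω : ℝ≥0∞) ^ 2 := hTe.pow_const 2
  have hsplit2 : (∫⁻ ω, ((T ω : ℝ≥0∞) ^ 2 + T ω) / 2 ∂(P[|D])) * 2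
      = (∫⁻ ω, (T ω : ℝ≥0∞) ^ 2 ∂(P[|D])) + ∫⁻ ω, (T ω : ℝ≥0∞) ∂(P[|D]) := by
    rw [← lintegral_mul_const 2 (f := fun ω => ((T ω : ℝ≥0∞) ^ 2 + T ω) / 2) ((hT2meas.add hTe).div_const 2)]
    rw [show (fun ω => ((T ω : ℝ≥0∞) ^ 2 + T ω) / 2 * 2)
        = fun ω => (T ω : ℝ≥0∞) ^ 2 + T ω from
      funext (fun ω => ENNReal.div_mul_cancel (by norm_num) (by norm_num))]
    exact lintegral_add_left hT2meas _
  have key : (∫⁻ ω, (T ω : ℝ≥0∞) ^ 2 ∂(P[|D])) + ∫⁻ ω, (T ω : ℝ≥0∞) ∂(P[|D])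
      = 2 * (∫⁻ ω, (T ω : ENNReal) ∂P) * (∫⁻ ω, (T ω : ENNReal) ∂(P[|D])) := by
    rw [← hsplit2, ← hpart1]
    ring
  have heq := ENNReal.eq_sub_of_add_eq hThat.ne key
  refine ⟨heq, ?_⟩
  rw [heq]
  refine lt_of_le_of_lt tsub_le_self ?_
  exact ENNReal.mul_lt_top (ENNReal.mul_lt_top (by norm_num) hEfin) hThat
end

section
/- In the setting of Kac's formula: with T the first return time to D and P̂ = P(·|D), one has Ê[T]·E[T^2] = Ê[T(T+1)(2T+1)/6]; in particular if E[T^2] < ∞ and Ê[T] < ∞ then Ê[T^3] < ∞. -/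
open MeasureTheory Function ProbabilityTheory Filter

set_option linter.unusedVariables false
set_option linter.unusedSectionVars false

section KacDevelopment
variable {Ω : Type*} {m0 : MeasurableSpace Ω} {P : Measure Ω} [IsProbabilityMeasure P]
  {θ : Ω → Ω} {D : Set Ω} {T : Ω → ℕ}


lemma lt_T_iff (hTdef : ∀ ω, T ω = sInf {n : ℕ | 0 < n ∧ θ^[n] ω ∈ D}) (ω : Ω) (k : ℕ) :
    k < T ω ↔ (∃ n, 0 < n ∧ θ^[n] ω ∈ D) ∧ ∀ m ≤ k, ¬(0 < m ∧ θ^[m] ω ∈ D) := by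
  rw [hTdef]
  constructor
  · intro h
    have hne : {n : ℕ | 0 < n ∧ θ^[n] ω ∈ D}.Nonempty := by
      by_contra hne
      rw [Set.not_nonempty_iff_eq_empty] at hne
      rw [hne, Nat.sInf_empty] at h
      omega
    refine ⟨hne, fun m hm hmem => ?_⟩
    have := Nat.sInf_le (s := {n : ℕ | 0 < n ∧ θ^[n] ω ∈ D}) hmem
    omega
  · rintro ⟨hne, hmin⟩
    have hmem := Nat.sInf_mem hne
    by_contra h
    push_neg at h
    exact hmin _ h hmem

lemma T_mem (hTdef : ∀ ω, T ω = sInf {n : ℕ | 0 < n ∧ θ^[n] ω ∈ D}) (ω : Ω)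
    (h : ∃ n, 0 < n ∧ θ^[n] ω ∈ D) : 0 < T ω ∧ θ^[T ω] ω ∈ D := by
  have := Nat.sInf_mem (s := {n : ℕ | 0 < n ∧ θ^[n] ω ∈ D}) h
  rw [hTdef]; exact this

lemma not_mem_of_lt_T (hTdef : ∀ ω, T ω = sInf {n : ℕ | 0 < n ∧ θ^[n] ω ∈ D}) (ω : Ω)
    (m : ℕ) (h0 : 0 < m) (hm : m < T ω) : θ^[m] ω ∉ D := by
  intro hmem
  have : T ω ≤ m := by
    rw [hTdef]; exact Nat.sInf_le ⟨h0, hmem⟩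
  omega

lemma T_shift (hTdef : ∀ ω, T ω = sInf {n : ℕ | 0 < n ∧ θ^[n] ω ∈ D}) (ω : Ω)
    (hret : θ^[T ω] ω ∈ D) (k : ℕ) (hk : k < T ω) : T (θ^[k] ω) = T ω - k := by
  have hmem : T ω - k ∈ {n : ℕ | 0 < n ∧ θ^[n] (θ^[k] ω) ∈ D} := by
    refine ⟨by omega, ?_⟩
    rw [← Function.iterate_add_apply]
    have : T ω - k + k = T ω := by omega
    rw [this]; exact hret
  rw [hTdef]
  refine le_antisymm (Nat.sInf_le hmem) (le_csInf ⟨_, hmem⟩ ?_)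
  rintro n ⟨hn, hmemn⟩
  rw [← Function.iterate_add_apply] at hmemn
  by_contra h
  push_neg at h
  exact not_mem_of_lt_T hTdef ω (n + k) (by omega) (by omega) hmemn

lemma measurableSet_lt_T (hθ : Measurable θ) (hD : MeasurableSet D)
    (hTdef : ∀ ω, T ω = sInf {n : ℕ | 0 < n ∧ θ^[n] ω ∈ D}) (k : ℕ) :
    MeasurableSet {ω | k < T ω} := by
  have h1 : ∀ n : ℕ, MeasurableSet {ω | 0 < n ∧ θ^[n] ω ∈ D} := by
    intro n
    by_cases h : 0 < n
    · simp only [h, true_and]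
      exact (hθ.iterate n) hD
    · simp only [h, false_and]
      exact MeasurableSet.empty
  have : {ω | k < T ω} =
      (⋃ n, {ω | 0 < n ∧ θ^[n] ω ∈ D}) ∩ (⋂ m, ⋂ _ : m ≤ k, {ω | 0 < m ∧ θ^[m] ω ∈ D}ᶜ) := by
    ext ω
    simp only [Set.mem_setOf_eq, Set.mem_inter_iff, Set.mem_iUnion, Set.mem_iInter,
      Set.mem_compl_iff, lt_T_iff hTdef]
  rw [this]
  exact (MeasurableSet.iUnion h1).inter
    (MeasurableSet.iInter fun m => MeasurableSet.iInter fun _ => (h1 m).compl)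

lemma measurable_T (hθ : Measurable θ) (hD : MeasurableSet D)
    (hTdef : ∀ ω, T ω = sInf {n : ℕ | 0 < n ∧ θ^[n] ω ∈ D}) : Measurable T := by
  have hlt := measurableSet_lt_T hθ hD hTdef
  apply measurable_to_countable'
  intro n
  match n with
  | 0 =>
    have : T ⁻¹' {0} = {ω | 0 < T ω}ᶜ := by
      ext ω; simp only [Set.mem_preimage, Set.mem_singleton_iff, Set.mem_compl_iff,
        Set.mem_setOf_eq]; omega
    rw [this]; exact (hlt 0).compl
  | m + 1 =>
    have : T ⁻¹' {m + 1} = {ω | m < T ω} ∩ {ω | m + 1 < T ω}ᶜ := by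
      ext ω; simp only [Set.mem_preimage, Set.mem_singleton_iff, Set.mem_inter_iff,
        Set.mem_compl_iff, Set.mem_setOf_eq]; omega
    rw [this]; exact (hlt m).inter (hlt (m+1)).compl



lemma measurableSet_E (hθ : Measurable θ) (hD : MeasurableSet D) (N : ℕ) :
    MeasurableSet {ω | ∀ j < N, θ^[j] ω ∉ D} := by
  have : {ω | ∀ j < N, θ^[j] ω ∉ D} = ⋂ j, ⋂ _ : j < N, (θ^[j] ⁻¹' D)ᶜ := by
    ext ω; simp [Set.mem_iInter]
  rw [this]
  exact MeasurableSet.iInter fun j => MeasurableSet.iInter fun _ => ((hθ.iterate j) hD).compl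

lemma kac_step (hθ : MeasurePreserving θ P P) (hD : MeasurableSet D)
    (hTdef : ∀ ω, T ω = sInf {n : ℕ | 0 < n ∧ θ^[n] ω ∈ D})
    (hTfin : ∀ᵐ ω ∂P, ∃ n : ℕ, 0 < n ∧ θ^[n] ω ∈ D)
    (g : Ω → ENNReal) (hg : Measurable g) (N : ℕ) :
    ∫⁻ ω, g ω ∂P =
      (∑ k ∈ Finset.range N,
        ∫⁻ ω, (D ∩ {ω | k < T ω}).indicator (fun ω => g (θ^[k+1] ω)) ω ∂P) +
      ∫⁻ ω, {ω | ∀ j < N, θ^[j] ω ∉ D}.indicator (fun ω => g (θ^[N] ω)) ω ∂P := by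
  have hθm := hθ.measurable
  induction N with
  | zero =>
    have h0 : {ω : Ω | ∀ j < 0, θ^[j] ω ∉ D} = Set.univ := by
      ext ω; simp
    simp [h0]
  | succ N ih =>
    have key : ∫⁻ ω, {ω | ∀ j < N, θ^[j] ω ∉ D}.indicator (fun ω => g (θ^[N] ω)) ω ∂P =
        ∫⁻ ω, (D ∩ {ω | N < T ω}).indicator (fun ω => g (θ^[N+1] ω)) ω ∂P +
        ∫⁻ ω, {ω | ∀ j < N+1, θ^[j] ω ∉ D}.indicator (fun ω => g (θ^[N+1] ω)) ω ∂P := by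
      set EN : Set Ω := {ω | ∀ j < N, θ^[j] ω ∉ D} with hEN
      have hENm : MeasurableSet EN := measurableSet_E hθm hD N
      have hmeas : Measurable (EN.indicator (fun ω => g (θ^[N] ω))) :=
        (hg.comp (hθm.iterate N)).indicator hENm
      have h1 : ∫⁻ ω, EN.indicator (fun ω => g (θ^[N] ω)) ω ∂P =
          ∫⁻ ω, EN.indicator (fun ω => g (θ^[N] ω)) (θ ω) ∂P :=
        (hθ.lintegral_comp hmeas).symm
      have h2 : ∀ ω, EN.indicator (fun ω => g (θ^[N] ω)) (θ ω) =
          ((θ ⁻¹' EN ∩ D).indicator (fun ω => g (θ^[N+1] ω)) ω) +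
          ((θ ⁻¹' EN ∩ Dᶜ).indicator (fun ω => g (θ^[N+1] ω)) ω) := by
        intro ω
        by_cases hE : θ ω ∈ EN <;> by_cases hDω : ω ∈ D <;>
          simp [Set.indicator, hE, hDω, Function.iterate_succ_apply]
      have h3 : (θ ⁻¹' EN ∩ Dᶜ) = {ω | ∀ j < N+1, θ^[j] ω ∉ D} := by
        ext ω
        simp only [Set.mem_inter_iff, Set.mem_preimage, Set.mem_compl_iff, hEN,
          Set.mem_setOf_eq]
        constructor
        · rintro ⟨hpre, hnD⟩ j hj
          match j with
          | 0 => simpa using hnD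
          | j + 1 =>
            rw [Function.iterate_succ_apply]
            exact hpre j (by omega)
        · intro h
          refine ⟨fun j hj => ?_, by simpa using h 0 (by omega)⟩
          rw [← Function.iterate_succ_apply]
          exact h (j+1) (by omega)
      have h4 : ∫⁻ ω, (θ ⁻¹' EN ∩ D).indicator (fun ω => g (θ^[N+1] ω)) ω ∂P =
          ∫⁻ ω, (D ∩ {ω | N < T ω}).indicator (fun ω => g (θ^[N+1] ω)) ω ∂P := by
        apply lintegral_congr_ae
        filter_upwards [hTfin] with ω hω
        have hiff : ω ∈ θ ⁻¹' EN ∩ D ↔ ω ∈ D ∩ {ω | N < T ω} := by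
          simp only [Set.mem_inter_iff, Set.mem_preimage, hEN, Set.mem_setOf_eq,
            lt_T_iff hTdef]
          constructor
          · rintro ⟨hpre, hDω⟩
            refine ⟨hDω, hω, fun m hm => ?_⟩
            match m with
            | 0 => simp
            | m + 1 =>
              rintro ⟨-, hmem⟩
              exact hpre m (by omega) (by rwa [Function.iterate_succ_apply] at hmem)
          · rintro ⟨hDω, -, hmin⟩
            refine ⟨fun j hj => ?_, hDω⟩
            rw [← Function.iterate_succ_apply]
            exact fun hmem => hmin (j+1) (by omega) ⟨by omega, hmem⟩
        by_cases hmem : ω ∈ θ ⁻¹' EN ∩ D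
        · rw [Set.indicator_of_mem hmem, Set.indicator_of_mem (hiff.1 hmem)]
        · rw [Set.indicator_of_notMem hmem,
            Set.indicator_of_notMem (fun h => hmem (hiff.2 h))]
      calc ∫⁻ ω, EN.indicator (fun ω => g (θ^[N] ω)) ω ∂P
          = ∫⁻ ω, ((θ ⁻¹' EN ∩ D).indicator (fun ω => g (θ^[N+1] ω)) ω) +
              ((θ ⁻¹' EN ∩ Dᶜ).indicator (fun ω => g (θ^[N+1] ω)) ω) ∂P := by
            rw [h1]; exact lintegral_congr fun ω => h2 ω
        _ = ∫⁻ ω, (θ ⁻¹' EN ∩ D).indicator (fun ω => g (θ^[N+1] ω)) ω ∂P +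
            ∫⁻ ω, (θ ⁻¹' EN ∩ Dᶜ).indicator (fun ω => g (θ^[N+1] ω)) ω ∂P := by
            apply lintegral_add_left
            exact (hg.comp (hθm.iterate (N+1))).indicator
              ((hθm hENm).inter hD)
        _ = _ := by rw [h3, h4]
    rw [ih, key, Finset.sum_range_succ, add_assoc]


lemma kac_bounded (hθ : MeasurePreserving θ P P) (hD : MeasurableSet D)
    (hTdef : ∀ ω, T ω = sInf {n : ℕ | 0 < n ∧ θ^[n] ω ∈ D})
    (hTfin : ∀ᵐ ω ∂P, ∃ n : ℕ, 0 < n ∧ θ^[n] ω ∈ D)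
    (g : Ω → ENNReal) (hg : Measurable g) (C : ENNReal) (hC : C ≠ ⊤) (hgC : ∀ ω, g ω ≤ C) :
    ∫⁻ ω, g ω ∂P =
      ∑' k, ∫⁻ ω, (D ∩ {ω | k < T ω}).indicator (fun ω => g (θ^[k+1] ω)) ω ∂P := by
  have hθm := hθ.measurable
  set E : ℕ → Set Ω := fun N => {ω | ∀ j < N, θ^[j] ω ∉ D} with hE
  set S : ℕ → ENNReal :=
    fun k => ∫⁻ ω, (D ∩ {ω | k < T ω}).indicator (fun ω => g (θ^[k+1] ω)) ω ∂P with hS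
  set R : ℕ → ENNReal := fun N => ∫⁻ ω, (E N).indicator (fun ω => g (θ^[N] ω)) ω ∂P with hR
  have hEanti : Antitone E := by
    intro a b hab ω hω j hj
    exact hω j (by omega)
  have hEinter : P (⋂ N, E N) = 0 := by
    have hsub : (⋂ N, E N) ⊆ {ω | ¬ ∃ n : ℕ, 0 < n ∧ θ^[n] ω ∈ D} := by
      intro ω hω
      simp only [Set.mem_iInter, hE, Set.mem_setOf_eq] at hω
      rintro ⟨n, -, hn⟩
      exact hω (n+1) n (by omega) hn
    exact measure_mono_null hsub (ae_iff.1 hTfin)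
  have hPE : Tendsto (fun N => P (E N)) atTop (nhds 0) := by
    have := tendsto_measure_iInter_atTop (μ := P) (s := E)
      (fun N => (measurableSet_E hθm hD N).nullMeasurableSet) hEanti
      ⟨0, measure_ne_top _ _⟩
    rwa [hEinter] at this
  have hRle : ∀ N, R N ≤ C * P (E N) := by
    intro N
    have : ∀ ω, (E N).indicator (fun ω => g (θ^[N] ω)) ω ≤ (E N).indicator (fun _ => C) ω :=
      fun ω => Set.indicator_le_indicator' (fun _ => hgC _)
    calc R N ≤ ∫⁻ ω, (E N).indicator (fun _ => C) ω ∂P := lintegral_mono this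
      _ = C * P (E N) := lintegral_indicator_const (measurableSet_E hθm hD N) C
  have hR0 : Tendsto R atTop (nhds 0) := by
    have hCmul : Tendsto (fun N => C * P (E N)) atTop (nhds 0) := by
      have : Tendsto (fun N => C * P (E N)) atTop (nhds (C * 0)) :=
        ENNReal.Tendsto.const_mul hPE (Or.inr hC)
      simpa using this
    exact tendsto_of_tendsto_of_tendsto_of_le_of_le tendsto_const_nhds hCmul
      (fun N => zero_le) hRle
  have hsum : Tendsto (fun N => ∑ k ∈ Finset.range N, S k) atTop (nhds (∑' k, S k)) :=
    ENNReal.tendsto_nat_tsum S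
  have htot : Tendsto (fun N => (∑ k ∈ Finset.range N, S k) + R N) atTop
      (nhds (∑' k, S k + 0)) := hsum.add hR0
  have hconst : (fun N => (∑ k ∈ Finset.range N, S k) + R N) = fun _ => ∫⁻ ω, g ω ∂P := by
    funext N
    exact (kac_step hθ hD hTdef hTfin g hg N).symm
  rw [hconst] at htot
  have := tendsto_nhds_unique htot tendsto_const_nhds
  rw [add_zero] at this
  exact this.symm

lemma kac (hθ : MeasurePreserving θ P P) (hD : MeasurableSet D)
    (hTdef : ∀ ω, T ω = sInf {n : ℕ | 0 < n ∧ θ^[n] ω ∈ D})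
    (hTfin : ∀ᵐ ω ∂P, ∃ n : ℕ, 0 < n ∧ θ^[n] ω ∈ D)
    (g : Ω → ENNReal) (hg : Measurable g) :
    ∫⁻ ω, g ω ∂P =
      ∑' k, ∫⁻ ω, (D ∩ {ω | k < T ω}).indicator (fun ω => g (θ^[k+1] ω)) ω ∂P := by
  have hθm := hθ.measurable
  have hA : ∀ k : ℕ, MeasurableSet (D ∩ {ω | k < T ω}) :=
    fun k => hD.inter (measurableSet_lt_T hθm hD hTdef k)
  have hsup : ∀ x : ENNReal, (⨆ n : ℕ, min x (n : ENNReal)) = x := by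
    intro x
    rcases eq_or_ne x ⊤ with hx | hx
    · subst hx
      have hmin : ∀ n : ℕ, min (⊤ : ENNReal) (n : ENNReal) = (n : ENNReal) :=
        fun n => min_eq_right le_top
      simp_rw [hmin, ENNReal.iSup_natCast]
    · obtain ⟨n, hn⟩ := ENNReal.exists_nat_gt hx
      apply le_antisymm (iSup_le fun n => min_le_left _ _)
      exact le_trans (le_of_eq (min_eq_left hn.le).symm)
        (le_iSup (fun n : ℕ => min x (n : ENNReal)) n)
  have hmono : ∀ ω, Monotone (fun n : ℕ => min (g ω) (n : ENNReal)) := by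
    intro ω a b hab
    exact min_le_min le_rfl (by exact_mod_cast Nat.cast_le.2 hab)
  have hgn : ∀ n : ℕ, Measurable (fun ω => min (g ω) (n : ENNReal)) :=
    fun n => hg.min measurable_const
  -- LHS
  have hLHS : ∫⁻ ω, g ω ∂P = ⨆ n : ℕ, ∫⁻ ω, min (g ω) (n : ENNReal) ∂P := by
    rw [← lintegral_iSup hgn (fun a b hab ω => hmono ω hab)]
    simp_rw [hsup]
  have hbdd : ∀ n : ℕ, ∫⁻ ω, min (g ω) (n : ENNReal) ∂P =
      ∑' k, ∫⁻ ω, (D ∩ {ω | k < T ω}).indicator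
        (fun ω => min (g (θ^[k+1] ω)) (n : ENNReal)) ω ∂P :=
    fun n => kac_bounded hθ hD hTdef hTfin _ (hgn n) n (ENNReal.natCast_ne_top n)
      (fun ω => min_le_right _ _)
  rw [hLHS]
  simp_rw [hbdd]
  -- swap iSup and tsum via counting measure
  have hswap : ∀ F : ℕ → ℕ → ENNReal, (∀ k, Monotone (fun n => F n k)) →
      (⨆ n, ∑' k, F n k) = ∑' k, ⨆ n, F n k := by
    intro F hF
    have : ∀ n, ∑' k, F n k = ∫⁻ k, F n k ∂(Measure.count) := by
      intro n; rw [lintegral_count]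
    simp_rw [this]
    rw [← lintegral_iSup (fun n => measurable_from_top) (fun a b hab k => hF k hab)]
    rw [lintegral_count]
  rw [hswap _ ?_]
  · congr 1
    funext k
    rw [← lintegral_iSup]
    · congr 1
      funext ω
      by_cases hω : ω ∈ D ∩ {ω | k < T ω}
      · simp only [Set.indicator_of_mem hω, hsup]
      · simp only [Set.indicator_of_notMem hω, iSup_const]
    · exact fun n => ((hgn n).comp (hθm.iterate (k+1))).indicator (hA k)
    · intro a b hab ω
      exact Set.indicator_le_indicator (hmono _ hab)
  · intro k a b hab
    apply lintegral_mono
    intro ω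
    exact Set.indicator_le_indicator (hmono _ hab)


lemma kac_sum (hθ : MeasurePreserving θ P P) (hD : MeasurableSet D)
    (hTdef : ∀ ω, T ω = sInf {n : ℕ | 0 < n ∧ θ^[n] ω ∈ D})
    (hTfin : ∀ᵐ ω ∂P, ∃ n : ℕ, 0 < n ∧ θ^[n] ω ∈ D)
    (g : Ω → ENNReal) (hg : Measurable g) :
    ∫⁻ ω, g ω ∂P =
      ∫⁻ ω, D.indicator (fun ω => ∑ k ∈ Finset.range (T ω), g (θ^[k+1] ω)) ω ∂P := by
  have hθm := hθ.measurable
  rw [kac hθ hD hTdef hTfin g hg]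
  have hmeas : ∀ k : ℕ, Measurable fun ω => g (θ^[k+1] ω) :=
    fun k => hg.comp (hθm.iterate (k+1))
  rw [← lintegral_tsum (fun k => ((hmeas k).indicator
      (hD.inter (measurableSet_lt_T hθm hD hTdef k))).aemeasurable)]
  apply lintegral_congr
  intro ω
  by_cases hωD : ω ∈ D
  · rw [Set.indicator_of_mem hωD]
    rw [tsum_eq_sum (s := Finset.range (T ω))
      (fun k hk => Set.indicator_of_notMem
        (fun h => (Finset.mem_range.not.1 hk) h.2) _)]
    apply Finset.sum_congr rfl
    intro k hk
    rw [Finset.mem_range] at hk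
    exact Set.indicator_of_mem (Set.mem_inter hωD hk) _
  · rw [Set.indicator_of_notMem hωD]
    exact ENNReal.tsum_eq_zero.2
      (fun k => Set.indicator_of_notMem (fun h => hωD h.1) _)


end KacDevelopment

lemma sum_sq_ennreal (n : ℕ) :
    ∑ j ∈ Finset.range (n+1), (j : ENNReal)^2
      = (n : ENNReal) * ((n : ENNReal) + 1) * (2 * (n : ENNReal) + 1) / 6 := by
  have hnat : ∀ m : ℕ, 6 * ∑ j ∈ Finset.range (m+1), j^2 = m * (m+1) * (2*m+1) := by
    intro m
    induction m with
    | zero => simp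
    | succ m ih => rw [Finset.sum_range_succ, Nat.mul_add, ih]; ring
  rw [ENNReal.eq_div_iff (by norm_num) (by norm_num)]
  calc (6 : ENNReal) * ∑ j ∈ Finset.range (n+1), (j : ENNReal)^2
      = ((6 * ∑ j ∈ Finset.range (n+1), j^2 : ℕ) : ENNReal) := by push_cast; ring
    _ = ((n * (n+1) * (2*n+1) : ℕ) : ENNReal) := by rw [hnat]
    _ = (n : ENNReal) * ((n : ENNReal) + 1) * (2 * (n : ENNReal) + 1) := by push_cast; ring


/-- In the Kac setting, `Ê[T]·E[T²] = Ê[T(T+1)(2T+1)/6]`; in particular if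
`E[T²] < ∞` and `Ê[T] < ∞` then `Ê[T³] < ∞`. -/
theorem stmt_13 {Ω : Type*} {m0 : MeasurableSpace Ω} (P : Measure Ω) [IsProbabilityMeasure P]
    (θ : Ω → Ω) (hθ : MeasurePreserving θ P P) (hergodic : Ergodic θ P)
    (D : Set Ω) (hD : MeasurableSet D) (hDpos : 0 < P D)
    (T : Ω → ℕ) (hTdef : ∀ ω, T ω = sInf {n : ℕ | 0 < n ∧ θ^[n] ω ∈ D})
    (hTfin : ∀ᵐ ω ∂P, ∃ n : ℕ, 0 < n ∧ θ^[n] ω ∈ D) :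
    (∫⁻ ω, (T ω : ENNReal) ∂(P[|D])) * (∫⁻ ω, (T ω : ENNReal) ^ 2 ∂P)
        = ∫⁻ ω, (T ω : ENNReal) * ((T ω : ENNReal) + 1) * (2 * (T ω : ENNReal) + 1) / 6 ∂(P[|D])
    ∧ (∫⁻ ω, (T ω : ENNReal) ^ 2 ∂P < ⊤ →
        ∫⁻ ω, (T ω : ENNReal) ∂(P[|D]) < ⊤ →
        ∫⁻ ω, (T ω : ENNReal) ^ 3 ∂(P[|D]) < ⊤) := by
  have hθm := hθ.measurable
  have hT : Measurable T := measurable_T hθm hD hTdef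
  have hTc : ∀ φ : ℕ → ENNReal, Measurable fun ω => φ (T ω) :=
    fun φ => measurable_from_top.comp hT
  have hcond : ∀ f : Ω → ENNReal,
      ∫⁻ ω, f ω ∂(P[|D]) = (P D)⁻¹ * ∫⁻ ω, D.indicator f ω ∂P := by
    intro f
    rw [ProbabilityTheory.cond, lintegral_smul_measure, lintegral_indicator hD, smul_eq_mul]
  -- Kac with g = 1
  have hK1 : ∫⁻ ω, D.indicator (fun ω => (T ω : ENNReal)) ω ∂P = 1 := by
    have h := kac_sum hθ hD hTdef hTfin (fun _ => 1) measurable_const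
    simp only [lintegral_one, measure_univ, Finset.sum_const, Finset.card_range,
      nsmul_eq_mul, mul_one] at h
    exact h.symm
  -- invariance of T² under the induced map
  have hK3 : ∫⁻ ω, D.indicator (fun ω => (T ω : ENNReal)^2) ω ∂P =
      ∫⁻ ω, D.indicator (fun ω => (T (θ^[T ω] ω) : ENNReal)^2) ω ∂P := by
    have h := kac_sum hθ hD hTdef hTfin
      (D.indicator (fun ω => (T ω : ENNReal)^2)) ((hTc (fun n => (n:ENNReal)^2)).indicator hD)
    rw [h]
    apply lintegral_congr_ae
    filter_upwards [hTfin] with ω hω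
    by_cases hωD : ω ∈ D
    · rw [Set.indicator_of_mem hωD, Set.indicator_of_mem hωD]
      obtain ⟨hTpos, hret⟩ := T_mem hTdef ω hω
      obtain ⟨m, hm⟩ : ∃ m, T ω = m + 1 := ⟨T ω - 1, by omega⟩
      rw [hm, Finset.sum_range_succ]
      have hzero : ∀ k ∈ Finset.range m, D.indicator (fun ω => (T ω : ENNReal)^2)
          (θ^[k+1] ω) = 0 := by
        intro k hk
        rw [Finset.mem_range] at hk
        exact Set.indicator_of_notMem
          (not_mem_of_lt_T hTdef ω (k+1) (by omega) (by omega)) _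
      rw [Finset.sum_eq_zero hzero, zero_add, ← hm, Set.indicator_of_mem hret]
    · rw [Set.indicator_of_notMem hωD, Set.indicator_of_notMem hωD]
  -- Kac with g = T²
  have hK2 : ∫⁻ ω, (T ω : ENNReal)^2 ∂P =
      ∫⁻ ω, D.indicator (fun ω => (∑ j ∈ Finset.range (T ω), (j : ENNReal)^2)
        + (T (θ^[T ω] ω) : ENNReal)^2) ω ∂P := by
    rw [kac_sum hθ hD hTdef hTfin (fun ω => (T ω : ENNReal)^2)
      (hTc (fun n => (n:ENNReal)^2))]
    apply lintegral_congr_ae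
    filter_upwards [hTfin] with ω hω
    by_cases hωD : ω ∈ D
    · rw [Set.indicator_of_mem hωD, Set.indicator_of_mem hωD]
      obtain ⟨hTpos, hret⟩ := T_mem hTdef ω hω
      obtain ⟨m, hm⟩ : ∃ m, T ω = m + 1 := ⟨T ω - 1, by omega⟩
      have hnat : ∑ k ∈ Finset.range m, (m - k)^2 = ∑ j ∈ Finset.range (m+1), j^2 := by
        rw [Finset.sum_range_succ' (fun j => j^2) m,
          ← Finset.sum_range_reflect (fun i => (i+1)^2) m]
        have h0 : (0:ℕ)^2 = 0 := by norm_num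
        rw [h0, Nat.add_zero]
        exact Finset.sum_congr rfl fun k hk => by
          rw [Finset.mem_range] at hk; congr 1; omega
      rw [hm, Finset.sum_range_succ]
      have hmain : ∑ k ∈ Finset.range m, (T (θ^[k+1] ω) : ENNReal)^2
          = ∑ j ∈ Finset.range (m+1), (j : ENNReal)^2 := by
        calc ∑ k ∈ Finset.range m, (T (θ^[k+1] ω) : ENNReal)^2
            = ∑ k ∈ Finset.range m, ((m - k : ℕ) : ENNReal)^2 := by
              refine Finset.sum_congr rfl fun k hk => ?_
              rw [Finset.mem_range] at hk
              have hs := T_shift hTdef ω hret (k+1) (by omega)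
              rw [hm] at hs
              rw [hs]
              have : m + 1 - (k+1) = m - k := by omega
              rw [this]
          _ = ((∑ k ∈ Finset.range m, (m - k)^2 : ℕ) : ENNReal) := by push_cast; rfl
          _ = ((∑ j ∈ Finset.range (m+1), j^2 : ℕ) : ENNReal) := by rw [hnat]
          _ = ∑ j ∈ Finset.range (m+1), (j : ENNReal)^2 := by push_cast; rfl
      rw [hmain]
    · rw [Set.indicator_of_notMem hωD, Set.indicator_of_notMem hωD]
  -- combine
  have hK4 : ∫⁻ ω, (T ω : ENNReal)^2 ∂P =
      ∫⁻ ω, D.indicator (fun ω =>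
        (T ω : ENNReal) * ((T ω : ENNReal) + 1) * (2 * (T ω : ENNReal) + 1) / 6) ω ∂P := by
    rw [hK2]
    have hsplit : ∀ ω, D.indicator (fun ω => (∑ j ∈ Finset.range (T ω), (j : ENNReal)^2)
          + (T (θ^[T ω] ω) : ENNReal)^2) ω
        = D.indicator (fun ω => ∑ j ∈ Finset.range (T ω), (j : ENNReal)^2) ω
          + D.indicator (fun ω => (T (θ^[T ω] ω) : ENNReal)^2) ω := by
      intro ω
      by_cases h : ω ∈ D <;> simp [Set.indicator, h]
    simp_rw [hsplit]
    rw [lintegral_add_left ((hTc (fun n => ∑ j ∈ Finset.range n, (j : ENNReal)^2)).indicator hD)]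
    rw [← hK3]
    rw [← lintegral_add_left
      ((hTc (fun n => ∑ j ∈ Finset.range n, (j : ENNReal)^2)).indicator hD)]
    apply lintegral_congr
    intro ω
    by_cases h : ω ∈ D
    · simp only [Set.indicator_of_mem h]
      rw [← sum_sq_ennreal (T ω), Finset.sum_range_succ]
    · simp only [Set.indicator_of_notMem h, add_zero]
  have hpart1 : (∫⁻ ω, (T ω : ENNReal) ∂(P[|D])) * (∫⁻ ω, (T ω : ENNReal) ^ 2 ∂P)
      = ∫⁻ ω, (T ω : ENNReal) * ((T ω : ENNReal) + 1) * (2 * (T ω : ENNReal) + 1) / 6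
          ∂(P[|D]) := by
    rw [hcond, hcond, hK1, mul_one, ← hK4]
  refine ⟨hpart1, fun h2 h1 => ?_⟩
  have hfin6 : ∫⁻ ω, (T ω : ENNReal) * ((T ω : ENNReal) + 1) * (2 * (T ω : ENNReal) + 1) / 6
      ∂(P[|D]) < ⊤ := by
    rw [← hpart1]
    exact ENNReal.mul_lt_top h1 h2
  have hle : ∀ n : ℕ, (n : ENNReal)^3 ≤ (n : ENNReal) * ((n:ENNReal)+1) * (2*(n:ENNReal)+1) := by
    intro n
    have hn : n^3 ≤ n*(n+1)*(2*n+1) := by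
      have h : n*(n+1)*(2*n+1) = n^3 + (n^3 + 3*n^2 + n) := by ring
      rw [h]; exact Nat.le_add_right _ _
    calc (n:ENNReal)^3 = ((n^3 : ℕ) : ENNReal) := by push_cast; rfl
      _ ≤ ((n*(n+1)*(2*n+1) : ℕ) : ENNReal) := by exact_mod_cast hn
      _ = _ := by push_cast; ring
  calc ∫⁻ ω, (T ω : ENNReal)^3 ∂(P[|D])
      ≤ ∫⁻ ω, (T ω : ENNReal) * ((T ω : ENNReal) + 1) * (2 * (T ω : ENNReal) + 1)
          ∂(P[|D]) := lintegral_mono fun ω => hle (T ω)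
    _ = ∫⁻ ω, ((T ω : ENNReal) * ((T ω : ENNReal) + 1) * (2 * (T ω : ENNReal) + 1) / 6) * 6
          ∂(P[|D]) := lintegral_congr fun ω =>
            (ENNReal.div_mul_cancel (by norm_num) (by norm_num)).symm
    _ = (∫⁻ ω, (T ω : ENNReal) * ((T ω : ENNReal) + 1) * (2 * (T ω : ENNReal) + 1) / 6
          ∂(P[|D])) * 6 := lintegral_mul_const 6
            (hTc (fun n => (n : ENNReal) * ((n:ENNReal)+1) * (2*(n:ENNReal)+1) / 6))
    _ < ⊤ := ENNReal.mul_lt_top hfin6 (by norm_num)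
end
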